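/- In a k-uniform hypergraph H with girth at least 5 and minimum degree at least k'/2 + 1, if B is any set of k' vertices (k' ≤ k) and S denotes the set of vertices v such that every hyperedge containing v intersects B, then B ⊆ S and |S| ≤ |B| + 1. -/

import Mathlib

/-- The Kneser graph `K(k,n)`: vertices are the `k`-subsets of `[n]`,
adjacent iff disjoint. -/
def Kneser (k n : ℕ) : SimpleGraph {s : Finset (Fin n) // s.card = k} :=
  SimpleGraph.fromRel (fun u v => Disjoint u.1 v.1)

/-- `S` is a resolving set of `G`. -/
def IsResolvingSet {V : Type*} (G : SimpleGraph V) (S : Set V) : Prop :=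
  ∀ u v : V, (∀ s ∈ S, G.dist s u = G.dist s v) → u = v

/-- Detection value of hyperedge `h` against a probe set `B`, for parameter `k`:
`0` if `h ∩ B = ∅`, `k` if `|h ∩ B| = k`, and `1` otherwise. -/
def detVal {V : Type*} [DecidableEq V] (k : ℕ) (h B : Finset V) : ℕ :=
  if (h ∩ B).card = 0 then 0 else if (h ∩ B).card = k then k else 1

/-- A hypergraph (edge set `E`) is `k'`-detectable (with detection parameter `k`):
distinct `k'`-sets of vertices yield distinct detection vectors. -/
def Detectable {V : Type*} [DecidableEq V] (k k' : ℕ) (E : Finset (Finset V)) : Prop :=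
  ∀ B₁ B₂ : Finset V, B₁.card = k' → B₂.card = k' →
    (∀ h ∈ E, detVal k h B₁ = detVal k h B₂) → B₁ = B₂

/-- Degree of a vertex in a hypergraph with edge set `E`. -/
def hdeg {V : Type*} [DecidableEq V] (E : Finset (Finset V)) (v : V) : ℕ :=
  (E.filter (fun h => v ∈ h)).card

/-- A hypergraph (edge set `E`) has Berge girth at least 5:
no Berge cycle of length 2, 3, or 4. -/
def GirthGe5 {V : Type*} (E : Finset (Finset V)) : Prop :=
  ∀ ℓ : ℕ, 2 ≤ ℓ → ℓ < 5 →
    ¬ ∃ (v : ZMod ℓ → V) (e : ZMod ℓ → Finset V),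
        Function.Injective v ∧ Function.Injective e ∧
        (∀ i, e i ∈ E) ∧ (∀ i : ZMod ℓ, v i ∈ e i ∧ v (i + 1) ∈ e i)

lemma noTwo {V : Type*} {E : Finset (Finset V)} (hg : GirthGe5 E)
    {e₁ e₂ : Finset V} (h1 : e₁ ∈ E) (h2 : e₂ ∈ E) (hne : e₁ ≠ e₂)
    {x y : V} (hxy : x ≠ y) (hx1 : x ∈ e₁) (hx2 : x ∈ e₂) (hy1 : y ∈ e₁) (hy2 : y ∈ e₂) :
    False := by
  apply hg 2 le_rfl (by norm_num)
  refine ⟨fun i => if i = 0 then x else y, fun i => if i = 0 then e₁ else e₂, ?_, ?_, ?_, ?_⟩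
  · intro i j hij; rcases (by decide : ∀ a : ZMod 2, a = 0 ∨ a = 1) i with rfl | rfl <;> rcases (by decide : ∀ a : ZMod 2, a = 0 ∨ a = 1) j with rfl | rfl <;> simp_all
  · intro i j hij; rcases (by decide : ∀ a : ZMod 2, a = 0 ∨ a = 1) i with rfl | rfl <;> rcases (by decide : ∀ a : ZMod 2, a = 0 ∨ a = 1) j with rfl | rfl <;> simp_all
  · intro i; rcases (by decide : ∀ a : ZMod 2, a = 0 ∨ a = 1) i with rfl | rfl <;> simp_all
  · intro i; rcases (by decide : ∀ a : ZMod 2, a = 0 ∨ a = 1) i with rfl | rfl <;> simp_all [show ((1:ZMod 2)+1)=0 from rfl,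
      show ((0:ZMod 2)+1)=1 from rfl, show (1:ZMod 2) ≠ 0 from by decide]

lemma noThree {V : Type*} {E : Finset (Finset V)} (hg : GirthGe5 E)
    {e₁ e₂ e₃ : Finset V} (h1 : e₁ ∈ E) (h2 : e₂ ∈ E) (h3 : e₃ ∈ E)
    (h12 : e₁ ≠ e₂) (h13 : e₁ ≠ e₃) (h23 : e₂ ≠ e₃)
    {x y z : V} (hxy : x ≠ y) (hxz : x ≠ z) (hyz : y ≠ z)
    (m1 : x ∈ e₁) (m2 : y ∈ e₁) (m3 : y ∈ e₂) (m4 : z ∈ e₂) (m5 : z ∈ e₃) (m6 : x ∈ e₃) :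
    False := by
  have f1 : ((1:ZMod 3) = 0) = False := by decide
  have f2 : ((2:ZMod 3) = 0) = False := by decide
  have f3 : ((2:ZMod 3) = 1) = False := by decide
  have f4 : ((0:ZMod 3) = 1) = False := by decide
  have f5 : ((0:ZMod 3) = 2) = False := by decide
  have f6 : ((1:ZMod 3) = 2) = False := by decide
  have g1 : ((0:ZMod 3)+1) = 1 := by decide
  have g2 : ((1:ZMod 3)+1) = 2 := by decide
  have g3 : ((2:ZMod 3)+1) = 0 := by decide
  apply hg 3 (by norm_num) (by norm_num)
  refine ⟨fun i => if i = 0 then x else if i = 1 then y else z,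
          fun i => if i = 0 then e₁ else if i = 1 then e₂ else e₃, ?_, ?_, ?_, ?_⟩
  · intro i j hij; rcases (by decide : ∀ a : ZMod 3, a = 0 ∨ a = 1 ∨ a = 2) i with rfl | rfl | rfl <;> rcases (by decide : ∀ a : ZMod 3, a = 0 ∨ a = 1 ∨ a = 2) j with rfl | rfl | rfl <;> simp_all [f1,f2,f3,f4,f5,f6]
  · intro i j hij; rcases (by decide : ∀ a : ZMod 3, a = 0 ∨ a = 1 ∨ a = 2) i with rfl | rfl | rfl <;> rcases (by decide : ∀ a : ZMod 3, a = 0 ∨ a = 1 ∨ a = 2) j with rfl | rfl | rfl <;> simp_all [f1,f2,f3,f4,f5,f6]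
  · intro i; rcases (by decide : ∀ a : ZMod 3, a = 0 ∨ a = 1 ∨ a = 2) i with rfl | rfl | rfl <;> simp_all [f1,f2,f3,f4,f5,f6]
  · intro i; rcases (by decide : ∀ a : ZMod 3, a = 0 ∨ a = 1 ∨ a = 2) i with rfl | rfl | rfl <;> simp_all [f1,f2,f3,f4,f5,f6,g1,g2,g3]

lemma noFour {V : Type*} {E : Finset (Finset V)} (hg : GirthGe5 E)
    {e₁ e₂ e₃ e₄ : Finset V} (h1 : e₁ ∈ E) (h2 : e₂ ∈ E) (h3 : e₃ ∈ E) (h4 : e₄ ∈ E)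
    (h12 : e₁ ≠ e₂) (h13 : e₁ ≠ e₃) (h14 : e₁ ≠ e₄) (h23 : e₂ ≠ e₃) (h24 : e₂ ≠ e₄)
    (h34 : e₃ ≠ e₄)
    {x y z w : V} (hxy : x ≠ y) (hxz : x ≠ z) (hxw : x ≠ w) (hyz : y ≠ z) (hyw : y ≠ w)
    (hzw : z ≠ w)
    (m1 : x ∈ e₁) (m2 : y ∈ e₁) (m3 : y ∈ e₂) (m4 : z ∈ e₂) (m5 : z ∈ e₃) (m6 : w ∈ e₃)
    (m7 : w ∈ e₄) (m8 : x ∈ e₄) :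
    False := by
  have f1 : ((1:ZMod 4) = 0) = False := by decide
  have f2 : ((2:ZMod 4) = 0) = False := by decide
  have f3 : ((2:ZMod 4) = 1) = False := by decide
  have f4 : ((3:ZMod 4) = 0) = False := by decide
  have f5 : ((3:ZMod 4) = 1) = False := by decide
  have f6 : ((3:ZMod 4) = 2) = False := by decide
  have f7 : ((0:ZMod 4) = 1) = False := by decide
  have f8 : ((0:ZMod 4) = 2) = False := by decide
  have f9 : ((0:ZMod 4) = 3) = False := by decide
  have fa : ((1:ZMod 4) = 2) = False := by decide
  have fb : ((1:ZMod 4) = 3) = False := by decide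
  have fc : ((2:ZMod 4) = 3) = False := by decide
  have g1 : ((0:ZMod 4)+1) = 1 := by decide
  have g2 : ((1:ZMod 4)+1) = 2 := by decide
  have g3 : ((2:ZMod 4)+1) = 3 := by decide
  have g4 : ((3:ZMod 4)+1) = 0 := by decide
  apply hg 4 (by norm_num) (by norm_num)
  refine ⟨fun i => if i = 0 then x else if i = 1 then y else if i = 2 then z else w,
          fun i => if i = 0 then e₁ else if i = 1 then e₂ else if i = 2 then e₃ else e₄,
          ?_, ?_, ?_, ?_⟩
  · intro i j hij; rcases (by decide : ∀ a : ZMod 4, a = 0 ∨ a = 1 ∨ a = 2 ∨ a = 3) i with rfl | rfl | rfl | rfl <;> rcases (by decide : ∀ a : ZMod 4, a = 0 ∨ a = 1 ∨ a = 2 ∨ a = 3) j with rfl | rfl | rfl | rfl <;> simp_all [f1,f2,f3,f4,f5,f6,f7,f8,f9,fa,fb,fc]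
  · intro i j hij; rcases (by decide : ∀ a : ZMod 4, a = 0 ∨ a = 1 ∨ a = 2 ∨ a = 3) i with rfl | rfl | rfl | rfl <;> rcases (by decide : ∀ a : ZMod 4, a = 0 ∨ a = 1 ∨ a = 2 ∨ a = 3) j with rfl | rfl | rfl | rfl <;> simp_all [f1,f2,f3,f4,f5,f6,f7,f8,f9,fa,fb,fc]
  · intro i; rcases (by decide : ∀ a : ZMod 4, a = 0 ∨ a = 1 ∨ a = 2 ∨ a = 3) i with rfl | rfl | rfl | rfl <;> simp_all [f1,f2,f3,f4,f5,f6,f7,f8,f9,fa,fb,fc]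
  · intro i; rcases (by decide : ∀ a : ZMod 4, a = 0 ∨ a = 1 ∨ a = 2 ∨ a = 3) i with rfl | rfl | rfl | rfl <;> simp_all [f1,f2,f3,f4,f5,f6,f7,f8,f9,fa,fb,fc,g1,g2,g3,g4]

/-- Key lemma: in a girth-≥5 hypergraph, a closed 4-walk `x,b₁,y,b₂` with distinct
vertices forces all four connecting edges to coincide. -/
lemma keyLemma {V : Type*} {E : Finset (Finset V)} (hg : GirthGe5 E)
    {x y b₁ b₂ : V} (hxy : x ≠ y) (hxb1 : x ≠ b₁) (hxb2 : x ≠ b₂)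
    (hyb1 : y ≠ b₁) (hyb2 : y ≠ b₂) (hb : b₁ ≠ b₂)
    {e₁ e₂ e₃ e₄ : Finset V} (he₁ : e₁ ∈ E) (he₂ : e₂ ∈ E) (he₃ : e₃ ∈ E) (he₄ : e₄ ∈ E)
    (m1 : x ∈ e₁) (m2 : b₁ ∈ e₁) (m3 : b₁ ∈ e₂) (m4 : y ∈ e₂)
    (m5 : y ∈ e₃) (m6 : b₂ ∈ e₃) (m7 : b₂ ∈ e₄) (m8 : x ∈ e₄) :
    e₁ = e₂ ∧ e₂ = e₃ ∧ e₃ = e₄ := by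
  by_cases h12 : e₁ = e₂
  · by_cases h34 : e₃ = e₄
    · by_cases h13 : e₁ = e₃
      · exact ⟨h12, h12.symm.trans h13, h34⟩
      · exfalso
        have hx3 : x ∈ e₃ := by rw [h34]; exact m8
        have hy1 : y ∈ e₁ := by rw [h12]; exact m4
        exact noTwo hg he₁ he₃ h13 hxy m1 hx3 hy1 m5
    · exfalso
      have hy1 : y ∈ e₁ := h12 ▸ m4
      have h13' : e₁ ≠ e₃ := by
        intro h
        exact noTwo hg he₁ he₄ (fun h' => h34 (h ▸ h')) hxb2 m1 m8 (h ▸ m6) m7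
      have h14' : e₁ ≠ e₄ := by
        intro h
        exact noTwo hg he₁ he₃ h13' hyb2 hy1 m5 (h ▸ m7) m6
      exact noThree hg he₁ he₃ he₄ h13' h14' h34 hxy hxb2 hyb2 m1 hy1 m5 m6 m7 m8
  · by_cases h34 : e₃ = e₄
    · exfalso
      have hx3 : x ∈ e₃ := by rw [h34]; exact m8
      have h23' : e₂ ≠ e₃ := by
        intro h
        have h13 : e₁ ≠ e₃ := fun h' => h12 (h'.trans h.symm)
        have hb₁3 : b₁ ∈ e₃ := by rw [← h]; exact m3
        exact noTwo hg he₁ he₃ h13 hxb1 m1 hx3 m2 hb₁3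
      have h13' : e₁ ≠ e₃ := by
        intro h
        have hb₁3 : b₁ ∈ e₃ := by rw [← h]; exact m2
        exact noTwo hg he₂ he₃ h23' hyb1.symm m3 hb₁3 m4 m5
      exact noThree hg he₁ he₂ he₃ h12 h13' h23' hxb1 hxy hyb1.symm m1 m2 m3 m4 m5 hx3
    · exfalso
      have h13' : e₁ ≠ e₃ := by
        intro h
        exact noTwo hg he₁ he₂ h12 hyb1.symm m2 m3 (h ▸ m5) m4
      have h24' : e₂ ≠ e₄ := by
        intro h
        exact noTwo hg he₁ he₂ h12 hxb1 m1 (h ▸ m8) m2 m3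
      have h14' : e₁ ≠ e₄ := by
        intro h
        have hb2e1 : b₂ ∈ e₁ := h ▸ m7
        have h23'' : e₂ ≠ e₃ := by
          intro h'
          exact noTwo hg he₁ he₂ h12 hb m2 m3 hb2e1 (h' ▸ m6)
        exact noThree hg he₂ he₃ he₁ h23'' (fun h' => h12 h'.symm) h13'.symm
          hyb1.symm hb hyb2 m3 m4 m5 m6 hb2e1 m2
      have h23' : e₂ ≠ e₃ := by
        intro h
        have hb2e2 : b₂ ∈ e₂ := h ▸ m6
        have h14'' : e₁ ≠ e₄ := h14'
        exact noThree hg he₁ he₂ he₄ h12 h14'' h24' hxb1 hxb2 hb m1 m2 m3 hb2e2 m7 m8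
      exact noFour hg he₁ he₂ he₃ he₄ h12 h13' h14' h23' h24' h34
        hxb1 hxy hxb2 hyb1.symm hb hyb2 m1 m2 m3 m4 m5 m6 m7 m8

lemma pickFn {V : Type*} [DecidableEq V] (B : Finset V) (E : Finset (Finset V)) (x : V)
    (hx : ∀ h ∈ E, x ∈ h → (h ∩ B).Nonempty) :
    ∃ c : Finset V → V, ∀ f ∈ E.filter (fun h => x ∈ h), c f ∈ f ∧ c f ∈ B := by
  classical
  refine ⟨fun f => if h : (f ∩ B).Nonempty then h.choose else x, ?_⟩
  intro f hf
  rw [Finset.mem_filter] at hf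
  have hne := hx f hf.1 hf.2
  simp only [dif_pos hne]
  have := hne.choose_spec
  rw [Finset.mem_inter] at this
  exact this

theorem stmt_8 {V : Type*} [DecidableEq V] (k k' : ℕ) (hk' : k' ≤ k)
    (E : Finset (Finset V)) (hunif : ∀ h ∈ E, h.card = k)
    (hdeg : ∀ v : V, ((hdeg E v : ℚ)) ≥ (k' : ℚ) / 2 + 1)
    (hgirth : GirthGe5 E)
    (B : Finset V) (hB : B.card = k') :
    ↑B ⊆ {v : V | ∀ h ∈ E, v ∈ h → (h ∩ B).Nonempty} ∧
      Set.ncard {v : V | ∀ h ∈ E, v ∈ h → (h ∩ B).Nonempty} ≤ k' + 1 := by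
  classical
  set S : Set V := {v : V | ∀ h ∈ E, v ∈ h → (h ∩ B).Nonempty} with hSdef
  have hdeg2 : ∀ x : V, k' + 2 ≤ 2 * _root_.hdeg E x := by
    intro x
    have h1 := hdeg x
    have h2 : (k' : ℚ) + 2 ≤ 2 * (_root_.hdeg E x : ℚ) := by linarith
    exact_mod_cast h2
  have claim : ∀ v w : V, v ∈ S → v ∉ B → w ∈ S → w ∉ B → v = w := by
    intro v w hvS hvB hwS hwB
    by_contra hvw
    obtain ⟨cv, hcv⟩ := pickFn B E v hvS
    obtain ⟨cw, hcw⟩ := pickFn B E w hwS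
    set Fv := E.filter (fun h => v ∈ h) with hFv
    set Fw := E.filter (fun h => w ∈ h) with hFw
    have hFvE : ∀ f ∈ Fv, f ∈ E ∧ v ∈ f := fun f hf => Finset.mem_filter.mp hf
    have hFwE : ∀ f ∈ Fw, f ∈ E ∧ w ∈ f := fun f hf => Finset.mem_filter.mp hf
    have injv : Set.InjOn cv ↑Fv := by
      intro f hf g hg hfg
      by_contra hne
      have hbf := hcv f hf; have hbg := hcv g hg
      have hnv : v ≠ cv f := fun h => hvB (h ▸ hbf.2)
      exact noTwo hgirth (hFvE f hf).1 (hFvE g hg).1 hne hnv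
        (hFvE f hf).2 (hFvE g hg).2 hbf.1 (hfg ▸ hbg.1)
    have injw : Set.InjOn cw ↑Fw := by
      intro f hf g hg hfg
      by_contra hne
      have hbf := hcw f hf; have hbg := hcw g hg
      have hnv : w ≠ cw f := fun h => hwB (h ▸ hbf.2)
      exact noTwo hgirth (hFwE f hf).1 (hFwE g hg).1 hne hnv
        (hFwE f hf).2 (hFwE g hg).2 hbf.1 (hfg ▸ hbg.1)
    set Bv := Fv.image cv with hBv
    set Bw := Fw.image cw with hBw
    have cardBv : Bv.card = _root_.hdeg E v := Finset.card_image_of_injOn injv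
    have cardBw : Bw.card = _root_.hdeg E w := Finset.card_image_of_injOn injw
    have hBvB : Bv ⊆ B := by
      intro b hb
      obtain ⟨f, hf, rfl⟩ := Finset.mem_image.mp hb
      exact (hcv f hf).2
    have hBwB : Bw ⊆ B := by
      intro b hb
      obtain ⟨f, hf, rfl⟩ := Finset.mem_image.mp hb
      exact (hcw f hf).2
    have hunion : (Bv ∪ Bw).card ≤ k' := hB ▸ Finset.card_le_card (Finset.union_subset hBvB hBwB)
    have hintcard : 2 ≤ (Bv ∩ Bw).card := by
      have := Finset.card_union_add_card_inter Bv Bw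
      have h1 := hdeg2 v; have h2 := hdeg2 w
      omega
    obtain ⟨b₁, hb₁, b₂, hb₂, hb12⟩ := Finset.one_lt_card.mp hintcard
    have hb₁v := Finset.mem_inter.mp hb₁
    have hb₂v := Finset.mem_inter.mp hb₂
    obtain ⟨f₁, hf₁, hcf₁⟩ := Finset.mem_image.mp hb₁v.1
    obtain ⟨g₁, hg₁, hcg₁⟩ := Finset.mem_image.mp hb₁v.2
    obtain ⟨f₂, hf₂, hcf₂⟩ := Finset.mem_image.mp hb₂v.1
    obtain ⟨g₂, hg₂, hcg₂⟩ := Finset.mem_image.mp hb₂v.2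
    have hb₁B : b₁ ∈ B := hBvB hb₁v.1
    have hb₂B : b₂ ∈ B := hBvB hb₂v.1
    have hvb₁ : v ≠ b₁ := fun h => hvB (h ▸ hb₁B)
    have hvb₂ : v ≠ b₂ := fun h => hvB (h ▸ hb₂B)
    have hwb₁ : w ≠ b₁ := fun h => hwB (h ▸ hb₁B)
    have hwb₂ : w ≠ b₂ := fun h => hwB (h ▸ hb₂B)
    have hkey := keyLemma hgirth hvw hvb₁ hvb₂ hwb₁ hwb₂ hb12
      (hFvE f₁ hf₁).1 (hFwE g₁ hg₁).1 (hFwE g₂ hg₂).1 (hFvE f₂ hf₂).1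
      (hFvE f₁ hf₁).2 (hcf₁ ▸ (hcv f₁ hf₁).1) (hcg₁ ▸ (hcw g₁ hg₁).1) (hFwE g₁ hg₁).2
      (hFwE g₂ hg₂).2 (hcg₂ ▸ (hcw g₂ hg₂).1) (hcf₂ ▸ (hcv f₂ hf₂).1) (hFvE f₂ hf₂).2
    obtain ⟨k12, k23, k34⟩ := hkey
    set e := f₁ with he
    have heE : e ∈ E := (hFvE f₁ hf₁).1
    have hve : v ∈ e := (hFvE f₁ hf₁).2
    have hwe : w ∈ e := k12 ▸ (hFwE g₁ hg₁).2
    have hb₁e : b₁ ∈ e := hcf₁ ▸ (hcv f₁ hf₁).1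
    have hb₂e : b₂ ∈ e := by
      have : b₂ ∈ g₂ := hcg₂ ▸ (hcw g₂ hg₂).1
      rw [k12, k23] at *
      exact this
    have heFv : e ∈ Fv := hf₁
    have heFw : e ∈ Fw := k12 ▸ hg₁
    -- chosen elements of edges other than e avoid e
    have avoidv : ∀ f ∈ Fv.erase e, cv f ∉ e := by
      intro f hf hce
      have hf' := Finset.mem_of_mem_erase hf
      have hne := Finset.ne_of_mem_erase hf
      have hnv : v ≠ cv f := fun h => hvB (h ▸ (hcv f hf').2)
      exact noTwo hgirth (hFvE f hf').1 heE hne hnv (hFvE f hf').2 hve (hcv f hf').1 hce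
    have avoidw : ∀ f ∈ Fw.erase e, cw f ∉ e := by
      intro f hf hce
      have hf' := Finset.mem_of_mem_erase hf
      have hne := Finset.ne_of_mem_erase hf
      have hnv : w ≠ cw f := fun h => hwB (h ▸ (hcw f hf').2)
      exact noTwo hgirth (hFwE f hf').1 heE hne hnv (hFwE f hf').2 hwe (hcw f hf').1 hce
    set Cv := (Fv.erase e).image cv with hCv
    set Cw := (Fw.erase e).image cw with hCw
    have cardCv : Cv.card = _root_.hdeg E v - 1 := by
      rw [hCv, Finset.card_image_of_injOn (injv.mono (by
        intro a ha; exact Finset.mem_coe.mpr (Finset.mem_of_mem_erase ha))),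
        Finset.card_erase_of_mem heFv]
      rfl
    have cardCw : Cw.card = _root_.hdeg E w - 1 := by
      rw [hCw, Finset.card_image_of_injOn (injw.mono (by
        intro a ha; exact Finset.mem_coe.mpr (Finset.mem_of_mem_erase ha))),
        Finset.card_erase_of_mem heFw]
      rfl
    have hdisj : Disjoint Cv Cw := by
      rw [Finset.disjoint_left]
      intro b hbCv hbCw
      obtain ⟨f, hf, hcf⟩ := Finset.mem_image.mp hbCv
      obtain ⟨g, hg, hcg⟩ := Finset.mem_image.mp hbCw
      have hf' := Finset.mem_of_mem_erase hf
      have hg' := Finset.mem_of_mem_erase hg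
      have hbe : b ∉ e := hcf ▸ avoidv f hf
      have hbB : b ∈ B := hcf ▸ (hcv f hf').2
      have hvb : v ≠ b := fun h => hvB (h ▸ hbB)
      have hwb : w ≠ b := fun h => hwB (h ▸ hbB)
      have hbb₁ : b ≠ b₁ := fun h => hbe (h ▸ hb₁e)
      have hkey2 := keyLemma hgirth hvw hvb hvb₁ hwb hwb₁ hbb₁
        (hFvE f hf').1 (hFwE g hg').1 heE heE
        (hFvE f hf').2 (hcf ▸ (hcv f hf').1) (hcg ▸ (hcw g hg').1) (hFwE g hg').2
        hwe hb₁e hb₁e hve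
      exact Finset.ne_of_mem_erase hg (hkey2.2.1)
    have hsubB : Cv ∪ Cw ∪ {b₁, b₂} ⊆ B := by
      intro b hb
      rcases Finset.mem_union.mp hb with hb | hb
      · rcases Finset.mem_union.mp hb with hb | hb
        · obtain ⟨f, hf, rfl⟩ := Finset.mem_image.mp hb
          exact (hcv f (Finset.mem_of_mem_erase hf)).2
        · obtain ⟨f, hf, rfl⟩ := Finset.mem_image.mp hb
          exact (hcw f (Finset.mem_of_mem_erase hf)).2
      · rcases Finset.mem_insert.mp hb with rfl | hb
        · exact hb₁B
        · rw [Finset.mem_singleton] at hb; exact hb ▸ hb₂B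
    have hdisj2 : Disjoint (Cv ∪ Cw) ({b₁, b₂} : Finset V) := by
      rw [Finset.disjoint_left]
      intro b hb hbpair
      have hbe : b ∈ e := by
        rcases Finset.mem_insert.mp hbpair with rfl | hb'
        · exact hb₁e
        · rw [Finset.mem_singleton] at hb'; exact hb' ▸ hb₂e
      rcases Finset.mem_union.mp hb with hb' | hb'
      · obtain ⟨f, hf, rfl⟩ := Finset.mem_image.mp hb'
        exact avoidv f hf hbe
      · obtain ⟨f, hf, rfl⟩ := Finset.mem_image.mp hb'
        exact avoidw f hf hbe
    have hcardsum : (Cv ∪ Cw ∪ {b₁, b₂}).card = Cv.card + Cw.card + ({b₁, b₂} : Finset V).card := by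
      rw [Finset.card_union_of_disjoint hdisj2, Finset.card_union_of_disjoint hdisj]
    have hpair : ({b₁, b₂} : Finset V).card = 2 := Finset.card_pair hb12
    have hle : (Cv ∪ Cw ∪ {b₁, b₂}).card ≤ k' := hB ▸ Finset.card_le_card hsubB
    have h1 := hdeg2 v; have h2 := hdeg2 w
    omega
  constructor
  · intro v hv
    simp only [hSdef, Set.mem_setOf_eq]
    exact fun h hE hvh => ⟨v, Finset.mem_inter.mpr ⟨hvh, hv⟩⟩
  · by_cases hex : ∃ w, w ∈ S ∧ w ∉ B
    · obtain ⟨w₀, hw₀S, hw₀B⟩ := hex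
      have hsub : S ⊆ ↑(insert w₀ B) := by
        intro x hx
        by_cases hxB : x ∈ B
        · exact Finset.mem_coe.mpr (Finset.mem_insert_of_mem hxB)
        · have := claim x w₀ hx hxB hw₀S hw₀B
          exact Finset.mem_coe.mpr (this ▸ Finset.mem_insert_self w₀ B)
      calc S.ncard ≤ (↑(insert w₀ B) : Set V).ncard :=
            Set.ncard_le_ncard hsub (Finset.finite_toSet _)
        _ = (insert w₀ B).card := Set.ncard_coe_finset _
        _ ≤ B.card + 1 := Finset.card_insert_le _ _
        _ = k' + 1 := by rw [hB]
    · push_neg at hex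
      have hsub : S ⊆ ↑B := fun x hx => Finset.mem_coe.mpr (hex x hx)
      calc S.ncard ≤ (↑B : Set V).ncard := Set.ncard_le_ncard hsub (Finset.finite_toSet _)
        _ = B.card := Set.ncard_coe_finset _
        _ ≤ k' + 1 := by omega
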